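/- arXiv:2510.00801 — 6 statements merged into one kernel-verified Lean document; each statement's English description precedes it below -/
import Mathlib

section
/- Let A ∈ ℝ^{n×n} and 1 ≤ r < n. Let Ū ∈ St(r,n) satisfy (I_n − ŪŪᵀ)·A·Ū = 0 and let V̄ ∈ St(r,n) satisfy (I_n − V̄V̄ᵀ)·Aᵀ·V̄ = 0. Suppose there exist monic polynomials p, q ∈ ℂ[X] with deg p = r such that charpoly(A) = p·q over ℂ, every root of p has real part strictly greater than every root of q, and the characteristic polynomials over ℂ of both ŪᵀAŪ and V̄ᵀAᵀV̄ equal p (i.e., both equilibria correspond to the dominant r eigenvalues of A). Then the r×r matrix V̄ᵀŪ is invertible. -/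
open Matrix Polynomial

section Aux

variable {R : Type*} [CommRing R] {k : Type*} [Fintype k] [DecidableEq k]

private lemma my_scalar_eq_smul_one (a : R) : Matrix.scalar k a = a • (1 : Matrix k k R) := by
  rw [scalar_apply, smul_one_eq_diagonal]

private lemma my_charpoly_transpose (M : Matrix k k R) : Mᵀ.charpoly = M.charpoly := by
  rw [charpoly, charpoly, ← det_transpose (charmatrix M)]
  congr 1
  ext i j
  by_cases h : i = j <;>
    simp [charmatrix_apply, transpose_apply, Matrix.diagonal, h, eq_comm]

private lemma my_charpoly_conj (G H A : Matrix k k R) (hHG : H * G = 1) :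
    (H * A * G).charpoly = A.charpoly := by
  have hc : charmatrix (H * A * G) =
      H.map (C : R →+* R[X]) * charmatrix A * G.map (C : R →+* R[X]) := by
    rw [charmatrix, charmatrix, RingHom.mapMatrix_apply, RingHom.mapMatrix_apply,
      mul_sub, sub_mul]
    congr 1
    · rw [my_scalar_eq_smul_one, mul_smul_comm, mul_one, smul_mul_assoc,
        ← Matrix.map_mul, hHG, Matrix.map_one _ (map_zero _) (map_one _),
        smul_one_eq_diagonal, ← scalar_apply]
    · rw [← Matrix.map_mul, ← Matrix.map_mul]
  rw [charpoly, hc, det_mul, det_mul, charpoly]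
  have h1 : (H.map (C : R →+* R[X])).det * (G.map (C : R →+* R[X])).det = 1 := by
    rw [← det_mul, ← Matrix.map_mul, hHG, Matrix.map_one _ (map_zero _) (map_one _), det_one]
  rw [mul_comm, ← mul_assoc, mul_comm (Matrix.det (Matrix.map G _)), h1, one_mul]

private lemma my_charpoly_factor {n r m : ℕ} (e : Fin n ≃ Fin r ⊕ Fin m)
    (A : Matrix (Fin n) (Fin n) R) (V : Matrix (Fin n) (Fin r) R)
    (W : Matrix (Fin n) (Fin m) R)
    (hV : Vᵀ * V = 1) (hWW : Wᵀ * W = 1) (hVW : Vᵀ * W = 0) (hWV : Wᵀ * V = 0)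
    (hcomp : V * Vᵀ + W * Wᵀ = 1) (hVA : Vᵀ * A = Vᵀ * A * V * Vᵀ) :
    A.charpoly = (Vᵀ * A * V).charpoly * (Wᵀ * A * W).charpoly := by
  classical
  set Cm := fromCols V W with hCm
  set Rm := fromRows Vᵀ Wᵀ with hRm
  have hRC : Rm * Cm = 1 := by
    rw [hRm, hCm, fromRows_mul_fromCols, hV, hWW, hVW, hWV, fromBlocks_one]
  have hVAW : Vᵀ * A * W = 0 := by
    rw [hVA, Matrix.mul_assoc, hVW, Matrix.mul_zero]
  have hblock : Rm * A * Cm =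
      fromBlocks (Vᵀ * A * V) 0 (Wᵀ * A * V) (Wᵀ * A * W) := by
    rw [hRm, hCm, fromRows_mul, fromRows_mul_fromCols, hVAW]
  set G := Cm.submatrix id ⇑e with hG
  set H := Rm.submatrix ⇑e id with hH
  have hHG : H * G = 1 := by
    rw [hH, hG]
    have : (Rm.submatrix ⇑e ⇑(Equiv.refl (Fin n))) * (Cm.submatrix ⇑(Equiv.refl (Fin n)) ⇑e)
        = (Rm * Cm).submatrix ⇑e ⇑e := submatrix_mul_equiv Rm Cm ⇑e (Equiv.refl (Fin n)) ⇑e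
    simp only [Equiv.coe_refl] at this
    rw [this, hRC, submatrix_one_equiv]
  have hHAG : H * A * G = (Rm * A * Cm).submatrix ⇑e ⇑e := by
    rw [hH, hG]
    have h1 : (Rm.submatrix ⇑e ⇑(Equiv.refl (Fin n))) * (A.submatrix ⇑(Equiv.refl (Fin n)) id)
        = (Rm * A).submatrix ⇑e id := submatrix_mul_equiv Rm A ⇑e (Equiv.refl (Fin n)) id
    have h2 : ((Rm * A).submatrix ⇑e ⇑(Equiv.refl (Fin n))) *
        (Cm.submatrix ⇑(Equiv.refl (Fin n)) ⇑e)
        = (Rm * A * Cm).submatrix ⇑e ⇑e :=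
      submatrix_mul_equiv (Rm * A) Cm ⇑e (Equiv.refl (Fin n)) ⇑e
    simp only [Equiv.coe_refl] at h1 h2
    rw [submatrix_id_id] at h1
    rw [← h2, ← h1]
  have hchar : (Rm * A * Cm).charpoly = A.charpoly := by
    have h3 : ((Rm * A * Cm).submatrix ⇑e ⇑e).charpoly = (Rm * A * Cm).charpoly := by
      have := charpoly_reindex (R := R) e.symm (Rm * A * Cm)
      simpa [reindex_apply] using this
    rw [← h3, ← hHAG, my_charpoly_conj G H A hHG]
  rw [← hchar, hblock, charpoly_fromBlocks_zero₁₂]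

private lemma my_isRoot_charpoly (B : Matrix k k ℂ) {μ : ℂ} {y : k → ℂ}
    (hy : y ≠ 0) (h : B.mulVec y = μ • y) :
    B.charpoly.IsRoot μ := by
  have hdet : (Matrix.scalar k μ - B).det = 0 := by
    rw [← Matrix.exists_mulVec_eq_zero_iff]
    refine ⟨y, hy, ?_⟩
    rw [sub_mulVec, scalar_apply, ← smul_one_eq_diagonal, smul_mulVec, one_mulVec, h,
      sub_self]
  have heval : B.charpoly.eval μ = (Matrix.scalar k μ - B).det := by
    rw [charpoly, eval_det, matPolyEquiv_charmatrix, eval_sub, eval_X, eval_C]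
  rwa [IsRoot, heval]

private lemma my_exists_complement (n r : ℕ) (hrn : r ≤ n)
    (V : Matrix (Fin n) (Fin r) ℝ) (hV : Vᵀ * V = 1) :
    ∃ W : Matrix (Fin n) (Fin (n - r)) ℝ,
      Wᵀ * W = 1 ∧ Vᵀ * W = 0 ∧ V * Vᵀ + W * Wᵀ = 1 := by
  classical
  let ψ : EuclideanSpace ℝ (Fin n) ≃ₗ[ℝ] (Fin n → ℝ) := WithLp.linearEquiv 2 ℝ (Fin n → ℝ)
  let f : EuclideanSpace ℝ (Fin n) →ₗ[ℝ] (Fin r → ℝ) :=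
    (Matrix.mulVecLin Vᵀ).comp ψ.toLinearMap
  have hmem : ∀ x : EuclideanSpace ℝ (Fin n),
      x ∈ LinearMap.ker f ↔ Vᵀ.mulVec (ψ x) = 0 := fun x => Iff.rfl
  have hsurj : Function.Surjective f := by
    intro y
    refine ⟨ψ.symm (V.mulVec y), ?_⟩
    show Vᵀ.mulVec (ψ (ψ.symm (V.mulVec y))) = y
    rw [ψ.apply_symm_apply, mulVec_mulVec, hV, one_mulVec]
  have hrank : Module.finrank ℝ (LinearMap.ker f) = n - r := by
    have h1 := LinearMap.finrank_range_add_finrank_ker f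
    rw [LinearMap.range_eq_top.mpr hsurj, finrank_top] at h1
    have h2 : Module.finrank ℝ (EuclideanSpace ℝ (Fin n)) = n := finrank_euclideanSpace_fin
    have h3 : Module.finrank ℝ (Fin r → ℝ) = r := Module.finrank_fin_fun ℝ
    rw [h2, h3] at h1
    omega
  let b : OrthonormalBasis (Fin (n - r)) ℝ (LinearMap.ker f) :=
    (stdOrthonormalBasis ℝ (LinearMap.ker f)).reindex (finCongr hrank)
  set W : Matrix (Fin n) (Fin (n - r)) ℝ :=
    Matrix.of fun i j => ((b j : EuclideanSpace ℝ (Fin n)) i) with hWdef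
  have hWW : Wᵀ * W = 1 := by
    ext j l
    have horth := b.orthonormal
    rw [orthonormal_iff_ite] at horth
    have h2 := horth j l
    rw [Submodule.coe_inner, PiLp.inner_apply] at h2
    simp only [RCLike.inner_apply, conj_trivial] at h2
    simp only [hWdef, Matrix.mul_apply, transpose_apply, Matrix.of_apply, Matrix.one_apply]
    rw [← h2]
    exact Finset.sum_congr rfl fun _ _ => mul_comm _ _
  have hVW : Vᵀ * W = 0 := by
    ext a j
    have hj : Vᵀ.mulVec (ψ ((b j : EuclideanSpace ℝ (Fin n)))) = 0 := (hmem _).mp (b j).2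
    have := congrFun hj a
    simpa [hWdef, Matrix.mul_apply, Matrix.mulVec, dotProduct, ψ, WithLp.coe_linearEquiv] using this
  have hWV : Wᵀ * V = 0 := by
    have := congrArg Matrix.transpose hVW
    simpa [transpose_mul] using this
  have h1 : fromRows Vᵀ Wᵀ * fromCols V W = 1 := by
    rw [fromRows_mul_fromCols, hV, hWW, hVW, hWV, fromBlocks_one]
  have e : Fin n ≃ Fin r ⊕ Fin (n - r) :=
    (finCongr (by omega : n = r + (n - r))).trans finSumFinEquiv.symm
  have h2 : fromCols V W * fromRows Vᵀ Wᵀ = 1 :=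
    (fromCols_mul_fromRows_eq_one_comm e V W Vᵀ Wᵀ).mpr h1
  rw [fromCols_mul_fromRows] at h2
  exact ⟨W, hWW, hVW, h2⟩

end Aux

/-- If the equilibria `Ub` (for `A`) and `Vb` (for `Aᵀ`) both correspond
to the dominant `r` eigenvalues of `A` — i.e. `charpoly(A) = p·q` over `ℂ` with `p` monic of
degree `r`, every root of `p` having real part strictly greater than every root of `q`, and
the complex characteristic polynomials of `UbᵀAUb` and `VbᵀAᵀVb` both equal to `p` — then
`VbᵀUb` is invertible. -/
theorem left_right_equilibria_nondegenerate
    (n r : ℕ) (hr : 1 ≤ r) (hrn : r < n)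
    (A : Matrix (Fin n) (Fin n) ℝ)
    (Ub : Matrix (Fin n) (Fin r) ℝ) (hUbst : Ubᵀ * Ub = 1)
    (hUbeq : (1 - Ub * Ubᵀ) * A * Ub = 0)
    (Vb : Matrix (Fin n) (Fin r) ℝ) (hVbst : Vbᵀ * Vb = 1)
    (hVbeq : (1 - Vb * Vbᵀ) * Aᵀ * Vb = 0)
    (p q : Polynomial ℂ) (hp : p.Monic) (hq : q.Monic)
    (hdeg : p.natDegree = r)
    (hfac : (A.map (Complex.ofReal ·)).charpoly = p * q)
    (hgap : ∀ μ ∈ p.roots, ∀ ν ∈ q.roots, ν.re < μ.re)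
    (hUp : ((Ubᵀ * A * Ub).map (Complex.ofReal ·)).charpoly = p)
    (hVp : ((Vbᵀ * Aᵀ * Vb).map (Complex.ofReal ·)).charpoly = p) :
    IsUnit (Vbᵀ * Ub) := by
  classical
  set φ : ℝ →+* ℂ := Complex.ofRealHom with hφdef
  -- basic real identities
  have hAU : A * Ub = Ub * (Ubᵀ * A * Ub) := by
    have h : A * Ub - Ub * Ubᵀ * A * Ub = 0 := by
      calc A * Ub - Ub * Ubᵀ * A * Ub
          = (1 - Ub * Ubᵀ) * A * Ub := by
            rw [Matrix.sub_mul, Matrix.sub_mul, Matrix.one_mul]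
        _ = 0 := hUbeq
    have h2 := sub_eq_zero.mp h
    rw [h2]
    simp only [Matrix.mul_assoc]
  have hAtV : Aᵀ * Vb = Vb * (Vbᵀ * Aᵀ * Vb) := by
    have h : Aᵀ * Vb - Vb * Vbᵀ * Aᵀ * Vb = 0 := by
      calc Aᵀ * Vb - Vb * Vbᵀ * Aᵀ * Vb
          = (1 - Vb * Vbᵀ) * Aᵀ * Vb := by
            rw [Matrix.sub_mul, Matrix.sub_mul, Matrix.one_mul]
        _ = 0 := hVbeq
    have h2 := sub_eq_zero.mp h
    rw [h2]
    simp only [Matrix.mul_assoc]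
  have hVA : Vbᵀ * A = Vbᵀ * A * Vb * Vbᵀ := by
    have h := congrArg Matrix.transpose hAtV
    simp only [transpose_mul, transpose_transpose, Matrix.mul_assoc] at h
    simp only [Matrix.mul_assoc]
    exact h
  -- orthogonal complement of the columns of Vb
  obtain ⟨W, hWW, hVW, hcomp⟩ := my_exists_complement n r hrn.le Vb hVbst
  have hWV : Wᵀ * Vb = 0 := by
    have := congrArg Matrix.transpose hVW
    simpa [transpose_mul] using this
  have e : Fin n ≃ Fin r ⊕ Fin (n - r) :=
    (finCongr (by omega : n = r + (n - r))).trans finSumFinEquiv.symm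
  have hfactR : A.charpoly = (Vbᵀ * A * Vb).charpoly * (Wᵀ * A * W).charpoly :=
    my_charpoly_factor e A Vb W hVbst hWW hVW hWV hcomp hVA
  -- transfer to ℂ
  have hmapφ : ∀ {k l : Type} [Fintype k] [Fintype l] (M : Matrix k l ℝ),
      M.map (Complex.ofReal ·) = M.map φ := fun _ => rfl
  have hVAVc : ((Vbᵀ * A * Vb).map φ).charpoly = p := by
    have htr : (Vbᵀ * Aᵀ * Vb)ᵀ = Vbᵀ * A * Vb := by
      simp only [transpose_mul, transpose_transpose, Matrix.mul_assoc]
    rw [← htr, transpose_map, my_charpoly_transpose, ← hmapφ, hVp]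
  have hWAWc : ((Wᵀ * A * W).map φ).charpoly = q := by
    have hfacC : (A.map φ).charpoly =
        ((Vbᵀ * A * Vb).map φ).charpoly * ((Wᵀ * A * W).map φ).charpoly := by
      rw [charpoly_map, charpoly_map, charpoly_map, hfactR, Polynomial.map_mul]
    rw [← hmapφ, hfac, hVAVc] at hfacC
    exact (mul_left_cancel₀ hp.ne_zero hfacC.symm)
  -- suppose not invertible
  by_contra hNU
  have hdet0 : (Vbᵀ * Ub).det = 0 := by
    by_contra hd
    exact hNU ((Matrix.isUnit_iff_isUnit_det _).mpr (isUnit_iff_ne_zero.mpr hd))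
  set Uc := Ub.map φ with hUc
  set Ac := A.map φ with hAc
  set Wc := W.map φ with hWc
  set Mc := (Vbᵀ * Ub).map φ with hMc
  set Pc := (Ubᵀ * A * Ub).map φ with hPc
  set Sc := (Vbᵀ * A * Vb).map φ with hSc
  have hdetc : Mc.det = 0 := by
    rw [hMc, ← RingHom.mapMatrix_apply, ← RingHom.map_det, hdet0, map_zero]
  -- intertwining relation
  have hSMr : Vbᵀ * A * Vb * (Vbᵀ * Ub) = Vbᵀ * Ub * (Ubᵀ * A * Ub) := by
    calc Vbᵀ * A * Vb * (Vbᵀ * Ub) = Vbᵀ * A * Vb * Vbᵀ * Ub := by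
          simp only [Matrix.mul_assoc]
      _ = Vbᵀ * A * Ub := by rw [← hVA]
      _ = Vbᵀ * (A * Ub) := by rw [Matrix.mul_assoc]
      _ = Vbᵀ * (Ub * (Ubᵀ * A * Ub)) := by rw [hAU]
      _ = Vbᵀ * Ub * (Ubᵀ * A * Ub) := by simp only [Matrix.mul_assoc]
  have hSM : Sc * Mc = Mc * Pc := by
    rw [hSc, hMc, hPc, ← Matrix.map_mul, ← Matrix.map_mul, hSMr]
  -- kernel of Mc is invariant under Pc
  set K : Submodule ℂ (Fin r → ℂ) := LinearMap.ker Mc.mulVecLin with hK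
  have hinv : ∀ z ∈ K, Pc.mulVecLin z ∈ K := by
    intro z hz
    have hz' : Mc.mulVec z = 0 := hz
    show Mc.mulVec (Pc.mulVec z) = 0
    rw [mulVec_mulVec, ← hSM, ← mulVec_mulVec, hz', mulVec_zero]
  obtain ⟨x, hx0, hMx⟩ := (Matrix.exists_mulVec_eq_zero_iff).mpr hdetc
  have hxK : x ∈ K := hMx
  haveI : Nontrivial K := nontrivial_of_ne ⟨x, hxK⟩ 0 (by
    intro h
    exact hx0 (congrArg Subtype.val h))
  obtain ⟨μ, hμ⟩ := Module.End.exists_eigenvalue (Pc.mulVecLin.restrict hinv)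
  obtain ⟨v, hv⟩ := hμ.exists_hasEigenvector
  set x₀ : Fin r → ℂ := (v : Fin r → ℂ) with hx₀def
  have hx₀ : x₀ ≠ 0 := by
    intro h
    exact hv.right (Subtype.ext h)
  have hPx : Pc.mulVec x₀ = μ • x₀ := by
    have := congrArg Subtype.val hv.apply_eq_smul
    rw [LinearMap.restrict_coe_apply] at this
    exact this
  have hMx₀ : Mc.mulVec x₀ = 0 := v.2
  -- μ is a root of p
  have hμp : μ ∈ p.roots := by
    rw [mem_roots hp.ne_zero]
    have := my_isRoot_charpoly Pc hx₀ hPx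
    rwa [hPc, ← hmapφ, hUp] at this
  -- the eigenvector of A
  set u : Fin n → ℂ := Uc.mulVec x₀ with hu
  have hUtU : (Ubᵀ.map φ) * Uc = 1 := by
    rw [hUc, ← Matrix.map_mul, hUbst, Matrix.map_one _ (map_zero φ) (map_one φ)]
  have hu0 : u ≠ 0 := by
    intro h
    apply hx₀
    have : (Ubᵀ.map φ).mulVec u = x₀ := by
      rw [hu, mulVec_mulVec, hUtU, one_mulVec]
    rw [h, mulVec_zero] at this
    exact this.symm
  have hAcUc : Ac * Uc = Uc * Pc := by
    rw [hAc, hUc, hPc, ← Matrix.map_mul, ← Matrix.map_mul, hAU]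
  have hAu : Ac.mulVec u = μ • u := by
    rw [hu, mulVec_mulVec, hAcUc, ← mulVec_mulVec, hPx, mulVec_smul]
  have hVu : (Vbᵀ.map φ).mulVec u = 0 := by
    rw [hu, mulVec_mulVec, ← Matrix.map_mul, ← hMc]
    exact hMx₀
  -- u lies in the column space of Wc
  set y : Fin (n - r) → ℂ := (Wᵀ.map φ).mulVec u with hy
  have hcompC : (Vb.map φ) * (Vbᵀ.map φ) + Wc * (Wᵀ.map φ) = 1 := by
    rw [hWc, ← Matrix.map_mul, ← Matrix.map_mul, ← Matrix.map_add, hcomp,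
      Matrix.map_one _ (map_zero φ) (map_one φ)]
    exact fun a₁ a₂ => map_add φ a₁ a₂
  have huW : u = Wc.mulVec y := by
    have h1 : u = ((Vb.map φ) * (Vbᵀ.map φ) + Wc * (Wᵀ.map φ)).mulVec u := by
      rw [hcompC, one_mulVec]
    rw [add_mulVec, ← mulVec_mulVec, ← mulVec_mulVec, hVu, mulVec_zero, zero_add] at h1
    exact h1
  have hy0 : y ≠ 0 := by
    intro h
    rw [h, mulVec_zero] at huW
    exact hu0 huW
  have hWAWy : ((Wᵀ * A * W).map φ).mulVec y = μ • y := by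
    have hmul : (Wᵀ * A * W).map φ = (Wᵀ.map φ) * Ac * Wc := by
      rw [hAc, hWc, ← Matrix.map_mul, ← Matrix.map_mul]
    rw [hmul, ← mulVec_mulVec, ← mulVec_mulVec, ← huW, hAu, mulVec_smul, hy]
  have hμq : μ ∈ q.roots := by
    rw [mem_roots hq.ne_zero]
    have := my_isRoot_charpoly ((Wᵀ * A * W).map φ) hy0 hWAWy
    rwa [hWAWc] at this
  exact absurd (hgap μ hμp μ hμq) (lt_irrefl μ.re)
end

section
/- Let A ∈ ℝ^{n×n}, C ∈ ℝ^{p×n}, and let Ū ∈ St(r,n) satisfy (I_n − ŪŪᵀ)·A·Ū = 0. Suppose the pair (A, C) is observable, i.e., for every nonzero x ∈ ℝⁿ there exists t ≥ 0 with C·exp(t·A)·x ≠ 0. Then the reduced pair (ŪᵀAŪ, CŪ) is observable: for every nonzero z ∈ ℝʳ there exists t ≥ 0 with (CŪ)·exp(t·ŪᵀAŪ)·z ≠ 0. -/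
open Matrix NormedSpace

lemma exp_intertwine {n r : ℕ} (M : Matrix (Fin n) (Fin n) ℝ)
    (N : Matrix (Fin r) (Fin r) ℝ) (X : Matrix (Fin n) (Fin r) ℝ)
    (h : M * X = X * N) : exp M * X = X * exp N := by
  have hpow : ∀ k : ℕ, M ^ k * X = X * N ^ k := by
    intro k
    induction k with
    | zero => simp
    | succ k ih =>
      rw [pow_succ, pow_succ, Matrix.mul_assoc, h, ← Matrix.mul_assoc, ih, Matrix.mul_assoc]
  letI : SeminormedRing (Matrix (Fin n) (Fin n) ℝ) := Matrix.linftyOpSemiNormedRing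
  letI : NormedRing (Matrix (Fin n) (Fin n) ℝ) := Matrix.linftyOpNormedRing
  letI : NormedAlgebra ℝ (Matrix (Fin n) (Fin n) ℝ) := Matrix.linftyOpNormedAlgebra
  letI : SeminormedRing (Matrix (Fin r) (Fin r) ℝ) := Matrix.linftyOpSemiNormedRing
  letI : NormedRing (Matrix (Fin r) (Fin r) ℝ) := Matrix.linftyOpNormedRing
  letI : NormedAlgebra ℝ (Matrix (Fin r) (Fin r) ℝ) := Matrix.linftyOpNormedAlgebra
  have hL : HasSum (fun k : ℕ => ((k.factorial : ℝ))⁻¹ • M ^ k) (exp M) :=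
    exp_series_hasSum_exp' M
  have hR : HasSum (fun k : ℕ => ((k.factorial : ℝ))⁻¹ • N ^ k) (exp N) :=
    exp_series_hasSum_exp' N
  let fL : Matrix (Fin n) (Fin n) ℝ →+ Matrix (Fin n) (Fin r) ℝ :=
    { toFun := fun Y => Y * X
      map_zero' := Matrix.zero_mul X
      map_add' := fun a b => Matrix.add_mul a b X }
  let fR : Matrix (Fin r) (Fin r) ℝ →+ Matrix (Fin n) (Fin r) ℝ :=
    { toFun := fun Y => X * Y
      map_zero' := Matrix.mul_zero X
      map_add' := fun a b => Matrix.mul_add X a b }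
  have cL : Continuous fL := continuous_id.matrix_mul continuous_const
  have cR : Continuous fR := continuous_const.matrix_mul continuous_id
  have h1 : HasSum (fun k : ℕ => ((k.factorial : ℝ))⁻¹ • (M ^ k * X)) (exp M * X) := by
    have := hL.map fL cL
    simpa [fL, Function.comp_def, Matrix.smul_mul] using this
  have h2 : HasSum (fun k : ℕ => ((k.factorial : ℝ))⁻¹ • (X * N ^ k)) (X * exp N) := by
    have := hR.map fR cR
    simpa [fR, Function.comp_def, Matrix.mul_smul] using this
  have h3 : HasSum (fun k : ℕ => ((k.factorial : ℝ))⁻¹ • (M ^ k * X)) (X * exp N) := by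
    simpa [hpow] using h2
  exact h1.unique h3

/-- (Observability is inherited by the reduced model.) If `Ub ∈ St(r,n)`
is an equilibrium of the Oja flow for `A` and the pair `(A, C)` is observable, then the
reduced pair `(UbᵀAUb, CUb)` is observable. -/
theorem reduced_pair_observable
    (n r p : ℕ) (hr : 1 ≤ r) (hrn : r ≤ n)
    (A : Matrix (Fin n) (Fin n) ℝ) (C : Matrix (Fin p) (Fin n) ℝ)
    (Ub : Matrix (Fin n) (Fin r) ℝ) (hUbst : Ubᵀ * Ub = 1)
    (hUbeq : (1 - Ub * Ubᵀ) * A * Ub = 0)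
    (hobs : ∀ x : Fin n → ℝ, x ≠ 0 →
      ∃ t : ℝ, 0 ≤ t ∧ C.mulVec ((exp (t • A)).mulVec x) ≠ 0) :
    ∀ z : Fin r → ℝ, z ≠ 0 →
      ∃ t : ℝ, 0 ≤ t ∧ (C * Ub).mulVec ((exp (t • (Ubᵀ * A * Ub))).mulVec z) ≠ 0 := by
  intro z hz
  have hAU : A * Ub = Ub * (Ubᵀ * A * Ub) := by
    have h0 : A * Ub - Ub * Ubᵀ * A * Ub = 0 := by
      have := hUbeq
      rwa [Matrix.sub_mul, Matrix.sub_mul, Matrix.one_mul] at this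
    have := sub_eq_zero.mp h0
    rw [this]
    simp [Matrix.mul_assoc]
  have hx : Ub.mulVec z ≠ 0 := by
    intro h
    apply hz
    have : Ubᵀ.mulVec (Ub.mulVec z) = 0 := by rw [h]; simp
    rwa [Matrix.mulVec_mulVec, hUbst, Matrix.one_mulVec] at this
  obtain ⟨t, ht, hne⟩ := hobs (Ub.mulVec z) hx
  refine ⟨t, ht, ?_⟩
  have key : exp (t • A) * Ub = Ub * exp (t • (Ubᵀ * A * Ub)) := by
    apply exp_intertwine
    rw [Matrix.smul_mul, Matrix.mul_smul, hAU]
  intro hcontra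
  apply hne
  have : C.mulVec ((exp (t • A)).mulVec (Ub.mulVec z))
      = (C * Ub).mulVec ((exp (t • (Ubᵀ * A * Ub))).mulVec z) := by
    rw [Matrix.mulVec_mulVec, Matrix.mulVec_mulVec, Matrix.mulVec_mulVec,
      Matrix.mul_assoc C, key, ← Matrix.mul_assoc]
  rw [this, hcontra]
end

section
/- Let A ∈ ℝ^{n×n}, C ∈ ℝ^{p×n}, and let Ū ∈ St(r,n) satisfy (I_n − ŪŪᵀ)·A·Ū = 0. Then for every T ≥ 0, Ūᵀ·(∫₀ᵀ exp(t·Aᵀ)·Cᵀ·C·exp(t·A) dt)·Ū = ∫₀ᵀ exp(t·(ŪᵀAŪ)ᵀ)·(CŪ)ᵀ·(CŪ)·exp(t·ŪᵀAŪ) dt; that is, the projection by Ū of the finite-horizon observability Gramian of (A, C) equals the observability Gramian of the reduced pair (ŪᵀAŪ, CŪ). -/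
open Matrix NormedSpace

lemma exp_semiconj {n r : ℕ} (A : Matrix (Fin n) (Fin n) ℝ)
    (B : Matrix (Fin r) (Fin r) ℝ) (U : Matrix (Fin n) (Fin r) ℝ)
    (h : A * U = U * B) : exp A * U = U * exp B := by
  letI : NormedRing (Matrix (Fin n) (Fin n) ℝ) := Matrix.linftyOpNormedRing
  letI : NormedAlgebra ℝ (Matrix (Fin n) (Fin n) ℝ) := Matrix.linftyOpNormedAlgebra
  letI : NormedRing (Matrix (Fin r) (Fin r) ℝ) := Matrix.linftyOpNormedRing
  letI : NormedAlgebra ℝ (Matrix (Fin r) (Fin r) ℝ) := Matrix.linftyOpNormedAlgebra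
  have hpow : ∀ k : ℕ, A ^ k * U = U * B ^ k := by
    intro k
    induction k with
    | zero => simp
    | succ k ih =>
      rw [pow_succ, pow_succ, Matrix.mul_assoc, h, ← Matrix.mul_assoc, ih, Matrix.mul_assoc]
  let L : Matrix (Fin n) (Fin n) ℝ →ₗ[ℝ] Matrix (Fin n) (Fin r) ℝ :=
    { toFun := fun X => X * U
      map_add' := fun X Y => Matrix.add_mul X Y U
      map_smul' := fun c X => Matrix.smul_mul c X U }
  let R : Matrix (Fin r) (Fin r) ℝ →ₗ[ℝ] Matrix (Fin n) (Fin r) ℝ :=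
    { toFun := fun Y => U * Y
      map_add' := fun X Y => Matrix.mul_add U X Y
      map_smul' := fun c X => (Matrix.mul_smul U c X) }
  rw [exp_eq_tsum ℝ, exp_eq_tsum ℝ]
  have h1 : Summable fun k : ℕ => ((k.factorial : ℝ)⁻¹) • A ^ k := expSeries_summable' A
  have h2 : Summable fun k : ℕ => ((k.factorial : ℝ)⁻¹) • B ^ k := expSeries_summable' B
  calc (∑' (k : ℕ), ((k.factorial : ℝ)⁻¹) • A ^ k) * U
      = ∑' (k : ℕ), ((k.factorial : ℝ)⁻¹) • A ^ k * U :=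
        by exact (h1.hasSum.map L L.continuous_of_finiteDimensional).tsum_eq.symm
    _ = ∑' (k : ℕ), U * (((k.factorial : ℝ)⁻¹) • B ^ k) := by
        congr 1; funext k
        rw [Matrix.smul_mul, hpow, Matrix.mul_smul]
    _ = U * ∑' (k : ℕ), ((k.factorial : ℝ)⁻¹) • B ^ k :=
        by exact (h2.hasSum.map R R.continuous_of_finiteDimensional).tsum_eq

lemma mul_integral_mul {n r : ℕ} (P : Matrix (Fin r) (Fin n) ℝ) (Q : Matrix (Fin n) (Fin r) ℝ)
    (F : ℝ → Matrix (Fin n) (Fin n) ℝ) (hF : ∀ i j, Continuous fun t => F t i j) (T : ℝ) :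
    P * (Matrix.of fun i j => ∫ t in (0:ℝ)..T, F t i j) * Q =
      Matrix.of fun i j => ∫ t in (0:ℝ)..T, (P * F t * Q) i j := by
  ext i j
  have hint : ∀ (l k : Fin n), IntervalIntegrable
      (fun t => P i l * F t l k * Q k j) MeasureTheory.volume 0 T :=
    fun l k => ((continuous_const.mul (hF l k)).mul continuous_const).intervalIntegrable 0 T
  have h1 : (fun t => (P * F t * Q) i j)
      = fun t => ∑ k, ∑ l, P i l * F t l k * Q k j := by
    funext t
    simp [Matrix.mul_apply, Finset.sum_mul]
  have hcont : ∀ k : Fin n, Continuous fun t => ∑ l, P i l * F t l k * Q k j :=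
    fun k => continuous_finset_sum _ fun l _ => (continuous_const.mul (hF l k)).mul continuous_const
  have h2 : ∀ k : Fin n, (∫ t in (0:ℝ)..T, ∑ l, P i l * F t l k * Q k j)
      = ∑ l, P i l * (∫ t in (0:ℝ)..T, F t l k) * Q k j := by
    intro k
    rw [intervalIntegral.integral_finset_sum (fun l _ => hint l k)]
    congr 1; funext l
    rw [intervalIntegral.integral_mul_const, intervalIntegral.integral_const_mul]
  simp only [Matrix.of_apply, h1]
  rw [intervalIntegral.integral_finset_sum (fun k _ => (hcont k).intervalIntegrable 0 T)]
  simp only [h2, Matrix.mul_apply, Matrix.of_apply, Finset.sum_mul]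

lemma exp_smul_cont {n : ℕ} (A : Matrix (Fin n) (Fin n) ℝ) :
    Continuous fun t : ℝ => exp (t • A) := by
  letI : NormedRing (Matrix (Fin n) (Fin n) ℝ) := Matrix.linftyOpNormedRing
  letI : NormedAlgebra ℝ (Matrix (Fin n) (Fin n) ℝ) := Matrix.linftyOpNormedAlgebra
  letI : NormedAlgebra ℚ (Matrix (Fin n) (Fin n) ℝ) :=
    NormedAlgebra.restrictScalars ℚ ℝ (Matrix (Fin n) (Fin n) ℝ)
  exact exp_continuous.comp (continuous_id.smul continuous_const)

/-- (Projected observability Gramian.) If `Ub ∈ St(r,n)` is an equilibrium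
of the Oja flow for `A`, then for every `T ≥ 0` the projection by `Ub` of the finite-horizon
observability Gramian of `(A, C)` equals the observability Gramian of `(UbᵀAUb, CUb)`,
where the integrals are taken entrywise. -/
theorem projected_observability_gramian
    (n r p : ℕ) (hr : 1 ≤ r) (hrn : r ≤ n)
    (A : Matrix (Fin n) (Fin n) ℝ) (C : Matrix (Fin p) (Fin n) ℝ)
    (Ub : Matrix (Fin n) (Fin r) ℝ) (hUbst : Ubᵀ * Ub = 1)
    (hUbeq : (1 - Ub * Ubᵀ) * A * Ub = 0) :
    ∀ T : ℝ, 0 ≤ T →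
      Ubᵀ * (Matrix.of fun i j =>
          ∫ t in (0:ℝ)..T, (exp (t • Aᵀ) * Cᵀ * C * exp (t • A)) i j) * Ub =
        Matrix.of fun i j =>
          ∫ t in (0:ℝ)..T, (exp (t • (Ubᵀ * A * Ub)ᵀ) * (C * Ub)ᵀ * (C * Ub) *
            exp (t • (Ubᵀ * A * Ub))) i j := by
  intro T hT
  set B := Ubᵀ * A * Ub with hB
  have hA : A * Ub = Ub * B := by
    have h := hUbeq
    rw [Matrix.sub_mul, Matrix.sub_mul, Matrix.one_mul, sub_eq_zero] at h
    rw [h, hB]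
    simp only [Matrix.mul_assoc]
  have hsemi : ∀ t : ℝ, exp (t • A) * Ub = Ub * exp (t • B) := by
    intro t
    refine exp_semiconj _ _ _ ?_
    rw [Matrix.smul_mul, hA, Matrix.mul_smul]
  have key : ∀ t : ℝ, Ubᵀ * (exp (t • Aᵀ) * Cᵀ * C * exp (t • A)) * Ub
      = exp (t • Bᵀ) * (C * Ub)ᵀ * (C * Ub) * exp (t • B) := by
    intro t
    have e1 : exp (t • Aᵀ) = (exp (t • A))ᵀ := by
      rw [← Matrix.transpose_smul, Matrix.exp_transpose]
    have e2 : exp (t • Bᵀ) = (exp (t • B))ᵀ := by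
      rw [← Matrix.transpose_smul, Matrix.exp_transpose]
    have e4 : Ubᵀ * (exp (t • A))ᵀ = (exp (t • B))ᵀ * Ubᵀ := by
      rw [← Matrix.transpose_mul, hsemi t, Matrix.transpose_mul]
    rw [e1, e2]
    calc Ubᵀ * ((exp (t • A))ᵀ * Cᵀ * C * exp (t • A)) * Ub
        = (Ubᵀ * (exp (t • A))ᵀ) * Cᵀ * (C * (exp (t • A) * Ub)) := by
          simp only [Matrix.mul_assoc]
      _ = ((exp (t • B))ᵀ * Ubᵀ) * Cᵀ * (C * (Ub * exp (t • B))) := by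
          rw [e4, hsemi t]
      _ = (exp (t • B))ᵀ * (C * Ub)ᵀ * (C * Ub) * exp (t • B) := by
          rw [Matrix.transpose_mul C Ub]
          simp only [Matrix.mul_assoc]
  have hcont : ∀ i j, Continuous fun t : ℝ =>
      (exp (t • Aᵀ) * Cᵀ * C * exp (t • A)) i j :=
    fun i j => ((((exp_smul_cont Aᵀ).matrix_mul continuous_const).matrix_mul
      continuous_const).matrix_mul (exp_smul_cont A)).matrix_elem i j
  rw [mul_integral_mul Ubᵀ Ub _ hcont T]
  congr 1
  funext i j
  simp only [key]
end

section
/- Let A ∈ ℝ^{n×n}, B ∈ ℝ^{n×m}. Let Ū ∈ St(r,n) satisfy (I_n − ŪŪᵀ)·A·Ū = 0, let V̄ ∈ St(r,n) satisfy (I_n − V̄V̄ᵀ)·Aᵀ·V̄ = 0, and suppose R := V̄ᵀŪ is invertible. If the pair (A, B) is controllable, i.e., for every nonzero x ∈ ℝⁿ there exists t ≥ 0 with Bᵀ·exp(t·Aᵀ)·x ≠ 0, then the reduced pair (ŪᵀAŪ, R⁻¹·V̄ᵀB) is controllable: for every nonzero z ∈ ℝʳ there exists t ≥ 0 with (R⁻¹·V̄ᵀB)ᵀ·exp(t·(ŪᵀAŪ)ᵀ)·z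 ≠ 0. -/
open Matrix NormedSpace

lemma exp_intertwine_s17 {p q : ℕ} (X : Matrix (Fin p) (Fin p) ℝ) (Y : Matrix (Fin q) (Fin q) ℝ)
    (P : Matrix (Fin p) (Fin q) ℝ) (h : X * P = P * Y) :
    exp X * P = P * exp Y := by
  have hpow : ∀ k : ℕ, X ^ k * P = P * Y ^ k := by
    intro k
    induction k with
    | zero => simp
    | succ k ih =>
      rw [pow_succ, pow_succ, Matrix.mul_assoc, h, ← Matrix.mul_assoc, ih, Matrix.mul_assoc]
  letI : SeminormedRing (Matrix (Fin p) (Fin p) ℝ) := Matrix.linftyOpSemiNormedRing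
  letI : NormedRing (Matrix (Fin p) (Fin p) ℝ) := Matrix.linftyOpNormedRing
  letI : NormedAlgebra ℝ (Matrix (Fin p) (Fin p) ℝ) := Matrix.linftyOpNormedAlgebra
  letI : SeminormedRing (Matrix (Fin q) (Fin q) ℝ) := Matrix.linftyOpSemiNormedRing
  letI : NormedRing (Matrix (Fin q) (Fin q) ℝ) := Matrix.linftyOpNormedRing
  letI : NormedAlgebra ℝ (Matrix (Fin q) (Fin q) ℝ) := Matrix.linftyOpNormedAlgebra
  have hsX : Summable (fun k : ℕ => (Nat.factorial k : ℝ)⁻¹ • X ^ k) := expSeries_summable' X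
  have hsY : Summable (fun k : ℕ => (Nat.factorial k : ℝ)⁻¹ • Y ^ k) := expSeries_summable' Y
  let L : Matrix (Fin p) (Fin p) ℝ →ₗ[ℝ] Matrix (Fin p) (Fin q) ℝ :=
    { toFun := fun M => M * P
      map_add' := fun M N => Matrix.add_mul M N P
      map_smul' := fun c M => Matrix.smul_mul c M P }
  let L' : Matrix (Fin q) (Fin q) ℝ →ₗ[ℝ] Matrix (Fin p) (Fin q) ℝ :=
    { toFun := fun M => P * M
      map_add' := fun M N => Matrix.mul_add P M N
      map_smul' := fun c M => Matrix.mul_smul P c M }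
  have hL : Continuous L := L.continuous_of_finiteDimensional
  have hL' : Continuous L' := L'.continuous_of_finiteDimensional
  calc exp X * P = L (∑' k : ℕ, (Nat.factorial k : ℝ)⁻¹ • X ^ k) := by
        simp only [exp_eq_tsum ℝ]; rfl
    _ = ∑' k : ℕ, L ((Nat.factorial k : ℝ)⁻¹ • X ^ k) := ((hsX.hasSum.map L hL).tsum_eq).symm
    _ = ∑' k : ℕ, L' ((Nat.factorial k : ℝ)⁻¹ • Y ^ k) := by
        refine tsum_congr fun k => ?_
        simp only [L, L', LinearMap.coe_mk, AddHom.coe_mk, Matrix.smul_mul, Matrix.mul_smul,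
          hpow k]
    _ = L' (∑' k : ℕ, (Nat.factorial k : ℝ)⁻¹ • Y ^ k) := ((hsY.hasSum.map L' hL').tsum_eq)
    _ = P * exp Y := by simp only [exp_eq_tsum ℝ]; rfl

/-- (Controllability is inherited by the reduced model.) If `Ub` is an
equilibrium of the Oja flow for `A`, `Vb` an equilibrium for `Aᵀ`, `R := VbᵀUb` is
invertible, and `(A, B)` is controllable, then the reduced pair `(UbᵀAUb, R⁻¹VbᵀB)` is
controllable. -/
theorem reduced_pair_controllable
    (n r m : ℕ) (hr : 1 ≤ r) (hrn : r ≤ n)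
    (A : Matrix (Fin n) (Fin n) ℝ) (B : Matrix (Fin n) (Fin m) ℝ)
    (Ub : Matrix (Fin n) (Fin r) ℝ) (hUbst : Ubᵀ * Ub = 1)
    (hUbeq : (1 - Ub * Ubᵀ) * A * Ub = 0)
    (Vb : Matrix (Fin n) (Fin r) ℝ) (hVbst : Vbᵀ * Vb = 1)
    (hVbeq : (1 - Vb * Vbᵀ) * Aᵀ * Vb = 0)
    (hR : IsUnit (Vbᵀ * Ub))
    (hctrb : ∀ x : Fin n → ℝ, x ≠ 0 →
      ∃ t : ℝ, 0 ≤ t ∧ Bᵀ.mulVec ((exp (t • Aᵀ)).mulVec x) ≠ 0) :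
    ∀ z : Fin r → ℝ, z ≠ 0 →
      ∃ t : ℝ, 0 ≤ t ∧
        ((Vbᵀ * Ub)⁻¹ * (Vbᵀ * B))ᵀ.mulVec
          ((exp (t • (Ubᵀ * A * Ub)ᵀ)).mulVec z) ≠ 0 := by
  -- notation
  set D : Matrix (Fin r) (Fin r) ℝ := Vbᵀ * Aᵀ * Vb with hD
  set P : Matrix (Fin r) (Fin r) ℝ := Ubᵀ * Vb with hPdef
  -- equilibrium identities
  have h1 : A * Ub = Ub * (Ubᵀ * A * Ub) := by
    have h := hUbeq
    rw [Matrix.sub_mul, Matrix.one_mul, Matrix.sub_mul, sub_eq_zero] at h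
    rw [h]; simp only [Matrix.mul_assoc]
  have h2 : Aᵀ * Vb = Vb * D := by
    have h := hVbeq
    rw [Matrix.sub_mul, Matrix.one_mul, Matrix.sub_mul, sub_eq_zero] at h
    rw [h, hD]; simp only [Matrix.mul_assoc]
  -- P = (VbᵀUb)ᵀ is invertible
  have hPt : (Vbᵀ * Ub)ᵀ = P := by rw [transpose_mul, transpose_transpose]
  have hPunit : IsUnit P := by
    rw [← hPt, Matrix.isUnit_iff_isUnit_det, Matrix.det_transpose,
      ← Matrix.isUnit_iff_isUnit_det]
    exact hR
  have hPdetunit : IsUnit P.det := (Matrix.isUnit_iff_isUnit_det P).mp hPunit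
  -- intertwining relation: (UbᵀAUb)ᵀ * P = P * D
  have hint : (Ubᵀ * A * Ub)ᵀ * P = P * D := by
    have e1 : (Ubᵀ * A * Ub)ᵀ * Ubᵀ = Ubᵀ * Aᵀ := by
      calc (Ubᵀ * A * Ub)ᵀ * Ubᵀ = (Ub * (Ubᵀ * A * Ub))ᵀ :=
            (transpose_mul Ub (Ubᵀ * A * Ub)).symm
        _ = (A * Ub)ᵀ := by rw [← h1]
        _ = Ubᵀ * Aᵀ := transpose_mul A Ub
    calc (Ubᵀ * A * Ub)ᵀ * (Ubᵀ * Vb) = ((Ubᵀ * A * Ub)ᵀ * Ubᵀ) * Vb :=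
          (Matrix.mul_assoc _ Ubᵀ Vb).symm
      _ = Ubᵀ * (Aᵀ * Vb) := by rw [e1]; exact Matrix.mul_assoc _ _ _
      _ = Ubᵀ * (Vb * D) := by rw [h2]
      _ = (Ubᵀ * Vb) * D := (Matrix.mul_assoc Ubᵀ Vb D).symm
  intro z hz
  -- the lifted vector
  set w : Fin r → ℝ := P⁻¹.mulVec z with hw
  set x : Fin n → ℝ := Vb.mulVec w with hxdef
  have hzw : P.mulVec w = z := by
    rw [hw, Matrix.mulVec_mulVec, Matrix.mul_nonsing_inv P hPdetunit, Matrix.one_mulVec]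
  have hx : x ≠ 0 := by
    intro hx0
    have hw0 : w = 0 := by
      have : Vbᵀ.mulVec (Vb.mulVec w) = 0 := by rw [← hxdef, hx0, Matrix.mulVec_zero]
      rwa [Matrix.mulVec_mulVec, hVbst, Matrix.one_mulVec] at this
    exact hz (by rw [← hzw, hw0, Matrix.mulVec_zero])
  obtain ⟨t, ht, hne⟩ := hctrb x hx
  refine ⟨t, ht, ?_⟩
  -- exp intertwinings
  have key1 : exp (t • (Ubᵀ * A * Ub)ᵀ) * P = P * exp (t • D) := by
    apply exp_intertwine_s17
    rw [Matrix.smul_mul, Matrix.mul_smul, hint]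
  have key2 : exp (t • Aᵀ) * Vb = Vb * exp (t • D) := by
    apply exp_intertwine_s17
    rw [Matrix.smul_mul, Matrix.mul_smul, h2]
  -- the matrix identity
  have hXs : ((Vbᵀ * Ub)⁻¹ * (Vbᵀ * B))ᵀ = Bᵀ * Vb * P⁻¹ := by
    rw [transpose_mul, transpose_mul Vbᵀ B, transpose_nonsing_inv, hPt, transpose_transpose]
  have hmat : ((Vbᵀ * Ub)⁻¹ * (Vbᵀ * B))ᵀ * exp (t • (Ubᵀ * A * Ub)ᵀ) * P
      = Bᵀ * exp (t • Aᵀ) * Vb := by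
    calc ((Vbᵀ * Ub)⁻¹ * (Vbᵀ * B))ᵀ * exp (t • (Ubᵀ * A * Ub)ᵀ) * P
        = Bᵀ * Vb * P⁻¹ * (exp (t • (Ubᵀ * A * Ub)ᵀ) * P) := by
          rw [hXs, Matrix.mul_assoc]
      _ = Bᵀ * Vb * P⁻¹ * (P * exp (t • D)) := by rw [key1]
      _ = Bᵀ * Vb * (P⁻¹ * (P * exp (t • D))) := by rw [Matrix.mul_assoc]
      _ = Bᵀ * Vb * exp (t • D) := by
          rw [← Matrix.mul_assoc P⁻¹, Matrix.nonsing_inv_mul P hPdetunit, Matrix.one_mul]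
      _ = Bᵀ * (Vb * exp (t • D)) := Matrix.mul_assoc _ _ _
      _ = Bᵀ * (exp (t • Aᵀ) * Vb) := by rw [key2]
      _ = Bᵀ * exp (t • Aᵀ) * Vb := (Matrix.mul_assoc _ _ _).symm
  have hvec : ((Vbᵀ * Ub)⁻¹ * (Vbᵀ * B))ᵀ.mulVec ((exp (t • (Ubᵀ * A * Ub)ᵀ)).mulVec z)
      = Bᵀ.mulVec ((exp (t • Aᵀ)).mulVec x) := by
    rw [← hzw, Matrix.mulVec_mulVec, Matrix.mulVec_mulVec, hmat, ← Matrix.mulVec_mulVec,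
      ← Matrix.mulVec_mulVec, ← hxdef]
  rw [hvec]
  exact hne
end

section
/- Let A ∈ ℝ^{n×n}, B ∈ ℝ^{n×m}, C ∈ ℝ^{p×n}. Let Ū ∈ St(r,n) satisfy (I_n − ŪŪᵀ)·A·Ū = 0, let V̄ ∈ St(r,n) satisfy (I_n − V̄V̄ᵀ)·Aᵀ·V̄ = 0, and suppose R := V̄ᵀŪ is invertible. Set A_Ū := ŪᵀAŪ, A_V̄ := V̄ᵀAV̄, B_V̄ := V̄ᵀB, C_Ū := CŪ (all viewed as complex matrices). Then for every s ∈ ℂ such that s·I_r − A_Ū is invertible, the matrix s·I_r − A_V̄ is also invertible and C_Ū·(s·I_r − A_Ū)⁻¹·R⁻¹·B_V̄ = C_Ū·R⁻¹·(s·I_r − A_V̄)⁻¹·B_V̄; that is, the two reduced-order models (A_Ū, R⁻¹B_V̄, C_Ū) and (A_V̄, B_V̄, C_ŪR⁻¹) have the same transfer function. -/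
open Matrix

/-- (The two minimal reduced models share the same transfer function.)
With `Ub` an equilibrium for `A`, `Vb` an equilibrium for `Aᵀ`, and `R := VbᵀUb`
invertible, for every `s ∈ ℂ` with `sI − A_Ub` invertible, `sI − A_Vb` is invertible and
`C_Ub(sI − A_Ub)⁻¹R⁻¹B_Vb = C_UbR⁻¹(sI − A_Vb)⁻¹B_Vb`. -/
theorem reduced_models_same_transfer_function
    (n r m p : ℕ) (hr : 1 ≤ r) (hrn : r ≤ n)
    (A : Matrix (Fin n) (Fin n) ℝ) (B : Matrix (Fin n) (Fin m) ℝ)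
    (C : Matrix (Fin p) (Fin n) ℝ)
    (Ub : Matrix (Fin n) (Fin r) ℝ) (hUbst : Ubᵀ * Ub = 1)
    (hUbeq : (1 - Ub * Ubᵀ) * A * Ub = 0)
    (Vb : Matrix (Fin n) (Fin r) ℝ) (hVbst : Vbᵀ * Vb = 1)
    (hVbeq : (1 - Vb * Vbᵀ) * Aᵀ * Vb = 0)
    (hR : IsUnit (Vbᵀ * Ub))
    (AU AV R : Matrix (Fin r) (Fin r) ℂ)
    (BV : Matrix (Fin r) (Fin m) ℂ) (CU : Matrix (Fin p) (Fin r) ℂ)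
    (hAU : AU = (Ubᵀ * A * Ub).map (Complex.ofReal ·))
    (hAV : AV = (Vbᵀ * A * Vb).map (Complex.ofReal ·))
    (hRdef : R = (Vbᵀ * Ub).map (Complex.ofReal ·))
    (hBV : BV = (Vbᵀ * B).map (Complex.ofReal ·))
    (hCU : CU = (C * Ub).map (Complex.ofReal ·)) :
    ∀ s : ℂ, IsUnit (s • (1 : Matrix (Fin r) (Fin r) ℂ) - AU) →
      IsUnit (s • (1 : Matrix (Fin r) (Fin r) ℂ) - AV) ∧
      CU * (s • (1 : Matrix (Fin r) (Fin r) ℂ) - AU)⁻¹ * R⁻¹ * BV =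
        CU * R⁻¹ * (s • (1 : Matrix (Fin r) (Fin r) ℂ) - AV)⁻¹ * BV := by
  intro s hs
  -- equilibrium consequences over ℝ
  have hAUb : A * Ub = Ub * (Ubᵀ * (A * Ub)) := by
    have h' : A * Ub = Ub * Ubᵀ * A * Ub := by
      have h0 := hUbeq
      rw [Matrix.sub_mul, Matrix.one_mul, Matrix.sub_mul, sub_eq_zero] at h0
      exact h0
    conv_lhs => rw [h']
    simp only [Matrix.mul_assoc]
  have hVA : Vbᵀ * A = Vbᵀ * (A * Vb) * Vbᵀ := by
    have h' : Aᵀ * Vb = Vb * Vbᵀ * Aᵀ * Vb := by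
      have h0 := hVbeq
      rw [Matrix.sub_mul, Matrix.one_mul, Matrix.sub_mul, sub_eq_zero] at h0
      exact h0
    have h2t := congrArg Matrix.transpose h'
    simp only [Matrix.transpose_mul, Matrix.transpose_transpose, Matrix.mul_assoc] at h2t
    rw [h2t]
    simp only [Matrix.mul_assoc]
  -- intertwining over ℝ
  have hint : Vbᵀ * Ub * (Ubᵀ * A * Ub) = Vbᵀ * A * Vb * (Vbᵀ * Ub) := by
    calc Vbᵀ * Ub * (Ubᵀ * A * Ub) = Vbᵀ * (Ub * (Ubᵀ * (A * Ub))) := by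
          simp only [Matrix.mul_assoc]
      _ = Vbᵀ * (A * Ub) := by rw [← hAUb]
      _ = (Vbᵀ * A) * Ub := by rw [Matrix.mul_assoc]
      _ = Vbᵀ * A * Vb * (Vbᵀ * Ub) := by
          conv_lhs => rw [hVA]
          simp only [Matrix.mul_assoc]
  -- map to ℂ : R * AU = AV * R
  have mapmul : ∀ X Y : Matrix (Fin r) (Fin r) ℝ,
      ((X * Y).map (Complex.ofReal ·)) =
        X.map (Complex.ofReal ·) * Y.map (Complex.ofReal ·) := by
    intro X Y
    ext i j
    simp [Matrix.mul_apply]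
  have hmap : R * AU = AV * R := by
    rw [hAU, hAV, hRdef, ← mapmul, ← mapmul, hint]
  -- units
  have hRC : IsUnit R := by
    rw [hRdef]
    exact hR.map Complex.ofRealHom.mapMatrix
  have hRRi : R * R⁻¹ = 1 :=
    Matrix.mul_nonsing_inv _ ((Matrix.isUnit_iff_isUnit_det R).mp hRC)
  have hRiR : R⁻¹ * R = 1 :=
    Matrix.nonsing_inv_mul _ ((Matrix.isUnit_iff_isUnit_det R).mp hRC)
  set M := s • (1 : Matrix (Fin r) (Fin r) ℂ) - AU with hM
  set N := s • (1 : Matrix (Fin r) (Fin r) ℂ) - AV with hN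
  have hMMi : M * M⁻¹ = 1 :=
    Matrix.mul_nonsing_inv _ ((Matrix.isUnit_iff_isUnit_det M).mp hs)
  have hcomm : N * R = R * M := by
    rw [hM, hN, Matrix.sub_mul, Matrix.mul_sub, Matrix.smul_mul, Matrix.mul_smul,
      one_mul, mul_one, hmap]
  have hNinv : N * (R * M⁻¹ * R⁻¹) = 1 := by
    rw [← Matrix.mul_assoc, ← Matrix.mul_assoc, hcomm, Matrix.mul_assoc R M,
      hMMi, mul_one, hRRi]
  have hNunit : IsUnit N := by
    rw [Matrix.isUnit_iff_isUnit_det]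
    refine IsUnit.of_mul_eq_one ((R * M⁻¹ * R⁻¹).det) ?_
    rw [← Matrix.det_mul, hNinv, Matrix.det_one]
  refine ⟨hNunit, ?_⟩
  have hNi : N⁻¹ = R * M⁻¹ * R⁻¹ := Matrix.inv_eq_right_inv hNinv
  rw [hNi]
  calc CU * M⁻¹ * R⁻¹ * BV = CU * (R⁻¹ * R) * M⁻¹ * R⁻¹ * BV := by
        rw [hRiR, Matrix.mul_one]
    _ = CU * R⁻¹ * (R * M⁻¹ * R⁻¹) * BV := by
        simp only [Matrix.mul_assoc]
end

section
/- Let A ∈ ℝ^{n×n}, B ∈ ℝ^{n×m}, C ∈ ℝ^{p×n}. Let Ū ∈ St(r,n) satisfy (I_n − ŪŪᵀ)·A·Ū = 0 and let Ū_⊥ ∈ St(n−r,n) satisfy ŪᵀŪ_⊥ = 0 and Ū·Ūᵀ + Ū_⊥·Ū_⊥ᵀ = I_n; similarly let V̄ ∈ St(r,n) satisfy (I_n − V̄V̄ᵀ)·Aᵀ·V̄ = 0 with complement V̄_⊥. Suppose every eigenvalue (root of the characteristic polynomial over ℂ) of Ū_⊥ᵀAŪ_⊥ has strictly negative real part (equivalently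 for V̄_⊥ᵀAV̄_⊥). Then: (i) for any L ∈ ℝ^{r×p} such that every eigenvalue of ŪᵀAŪ − L·(CŪ) has strictly negative real part, every eigenvalue of A − Ū·L·C has strictly negative real part; and (ii) for any F ∈ ℝ^{m×r} such that every eigenvalue of V̄ᵀAV̄ − (V̄ᵀB)·F has strictly negative real part, every eigenvalue of A − B·F·V̄ᵀ has strictly negative real part. -/
open Matrix Polynomial

/-- Conjugation by an orthogonal matrix preserves the characteristic polynomial. -/
lemma charpoly_conj_orth {k : Type*} [Fintype k] [DecidableEq k] {R : Type*} [CommRing R]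
    (S M : Matrix k k R) (h1 : Sᵀ * S = 1) :
    (Sᵀ * M * S).charpoly = M.charpoly := by
  have hss : (Sᵀ.map (C : R → R[X])) * (S.map (C : R → R[X])) = 1 := by
    rw [← Matrix.map_mul (f := (C : R →+* R[X])), h1, Matrix.map_one _ (map_zero _) (map_one _)]
  have hcm : charmatrix (Sᵀ * M * S)
      = (Sᵀ.map (C : R → R[X])) * charmatrix M * (S.map (C : R → R[X])) := by
    rw [charmatrix, charmatrix]
    have hcomm : Matrix.scalar k (X : R[X]) * (S.map (C : R → R[X]))
        = (S.map (C : R → R[X])) * Matrix.scalar k (X : R[X]) :=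
      (Matrix.scalar_commute (X : R[X]) (fun r => mul_comm _ _) _).eq
    rw [Matrix.mul_sub, Matrix.sub_mul]
    congr 1
    · rw [Matrix.mul_assoc, hcomm, ← Matrix.mul_assoc, hss, Matrix.one_mul]
    · simp only [RingHom.mapMatrix_apply]
      rw [← Matrix.map_mul (f := (C : R →+* R[X])), ← Matrix.map_mul (f := (C : R →+* R[X]))]
  rw [charpoly, charpoly, hcm, det_mul, det_mul, mul_right_comm, ← det_mul, hss, det_one, one_mul]

/-- If `[U, P]` is an orthogonal change of basis that block upper-triangularizes `M`, then
the characteristic polynomial of `M` factors as the product of those of the diagonal blocks. -/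
lemma charpoly_eq_mul_of_blocks {n r s : ℕ} {R : Type*} [CommRing R] (hn : r + s = n)
    (M : Matrix (Fin n) (Fin n) R)
    (U : Matrix (Fin n) (Fin r) R) (P : Matrix (Fin n) (Fin s) R)
    (hUU : Uᵀ * U = 1) (hPP : Pᵀ * P = 1) (hUP : Uᵀ * P = 0) (hPU : Pᵀ * U = 0)
    (hcompl : U * Uᵀ + P * Pᵀ = 1)
    (hPMU : Pᵀ * M * U = 0) :
    M.charpoly = (Uᵀ * M * U).charpoly * (Pᵀ * M * P).charpoly := by
  set e : Fin r ⊕ Fin s ≃ Fin n := finSumFinEquiv.trans (finCongr hn) with he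
  set T : Matrix (Fin n) (Fin r ⊕ Fin s) R := fromCols U P with hT
  have hTT : Tᵀ * T = 1 := by
    rw [hT, transpose_fromCols, fromRows_mul_fromCols, hUU, hUP, hPU, hPP, fromBlocks_one]
  set S : Matrix (Fin n) (Fin n) R := T.submatrix id ⇑e.symm with hS
  have hSt : Sᵀ = Tᵀ.submatrix ⇑e.symm id := transpose_submatrix _ _ _
  have mulL : ∀ (B' : Matrix (Fin r ⊕ Fin s) (Fin n) R) (A' : Matrix (Fin n) (Fin n) R),
      B'.submatrix ⇑e.symm id * A' = (B' * A').submatrix ⇑e.symm id := by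
    intro B' A'; ext i j; simp [Matrix.mul_apply]
  have mulLR : ∀ (B' : Matrix (Fin r ⊕ Fin s) (Fin n) R) (A' : Matrix (Fin n) (Fin r ⊕ Fin s) R),
      B'.submatrix ⇑e.symm id * A'.submatrix id ⇑e.symm = (B' * A').submatrix ⇑e.symm ⇑e.symm := by
    intro B' A'; ext i j; simp [Matrix.mul_apply]
  have hSS : Sᵀ * S = 1 := by
    rw [hSt, hS, mulLR, hTT, submatrix_one_equiv]
  have hSconj : Sᵀ * M * S = (Tᵀ * M * T).submatrix ⇑e.symm ⇑e.symm := by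
    rw [hSt, hS, mulL, mulLR, Matrix.mul_assoc]
  have hblocks : Tᵀ * M * T = fromBlocks (Uᵀ * M * U) (Uᵀ * M * P) 0 (Pᵀ * M * P) := by
    rw [hT, transpose_fromCols, fromRows_mul, fromRows_mul_fromCols, ← hPMU]
  have h1 : (Sᵀ * M * S).charpoly = M.charpoly := charpoly_conj_orth S M hSS
  rw [← h1, hSconj, show (Tᵀ * M * T).submatrix ⇑e.symm ⇑e.symm = (Matrix.reindex e e) (Tᵀ * M * T)
      from rfl, Matrix.charpoly_reindex, hblocks, Matrix.charpoly_fromBlocks_zero₂₁]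

/-- A real square matrix is Hurwitz if every root of its characteristic polynomial over `ℂ`
has strictly negative real part. -/
def IsHurwitz {k : ℕ} (M : Matrix (Fin k) (Fin k) ℝ) : Prop :=
  ∀ μ ∈ ((M.map (Complex.ofReal ·)).charpoly).roots, μ.re < 0

lemma isHurwitz_of_blocks {n r s : ℕ} (hn : r + s = n)
    (M : Matrix (Fin n) (Fin n) ℝ)
    (U : Matrix (Fin n) (Fin r) ℝ) (P : Matrix (Fin n) (Fin s) ℝ)
    (hUU : Uᵀ * U = 1) (hPP : Pᵀ * P = 1) (hUP : Uᵀ * P = 0) (hPU : Pᵀ * U = 0)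
    (hcompl : U * Uᵀ + P * Pᵀ = 1)
    (hPMU : Pᵀ * M * U = 0)
    (h1 : IsHurwitz (Uᵀ * M * U)) (h2 : IsHurwitz (Pᵀ * M * P)) : IsHurwitz M := by
  intro μ hμ
  have hmap : ∀ {j : ℕ} (N : Matrix (Fin j) (Fin j) ℝ),
      N.map (Complex.ofReal ·) = N.map Complex.ofRealHom := fun _ => rfl
  have hc := charpoly_eq_mul_of_blocks hn M U P hUU hPP hUP hPU hcompl hPMU
  have key : ((M.map (Complex.ofReal ·)).charpoly)
      = ((Uᵀ * M * U).map (Complex.ofReal ·)).charpoly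
        * ((Pᵀ * M * P).map (Complex.ofReal ·)).charpoly := by
    rw [hmap, hmap, hmap, Matrix.charpoly_map, Matrix.charpoly_map, Matrix.charpoly_map, hc,
      Polynomial.map_mul]
  rw [key, Polynomial.roots_mul (mul_ne_zero (Matrix.charpoly_monic _).ne_zero
    (Matrix.charpoly_monic _).ne_zero), Multiset.mem_add] at hμ
  rcases hμ with h | h
  · exact h1 μ h
  · exact h2 μ h

/-- (Low-rank stabilization.) Let `Ub` (resp. `Vb`) be an equilibrium of
the Oja flow for `A` (resp. `Aᵀ`) with orthonormal complement `Up` (resp. `Vp`), and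
suppose `UpᵀAUp` and `VpᵀAVp` are Hurwitz. Then (i) if `UbᵀAUb − L·(CUb)` is Hurwitz, so
is `A − Ub·L·C`; and (ii) if `VbᵀAVb − (VbᵀB)·F` is Hurwitz, so is `A − B·F·Vbᵀ`. -/
theorem low_rank_stabilization
    (n r m p : ℕ) (hr : 1 ≤ r) (hrn : r < n)
    (A : Matrix (Fin n) (Fin n) ℝ) (B : Matrix (Fin n) (Fin m) ℝ)
    (C : Matrix (Fin p) (Fin n) ℝ)
    (Ub : Matrix (Fin n) (Fin r) ℝ) (hUbst : Ubᵀ * Ub = 1)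
    (hUbeq : (1 - Ub * Ubᵀ) * A * Ub = 0)
    (Up : Matrix (Fin n) (Fin (n - r)) ℝ) (hUpst : Upᵀ * Up = 1)
    (hUorth : Ubᵀ * Up = 0) (hUcompl : Ub * Ubᵀ + Up * Upᵀ = 1)
    (Vb : Matrix (Fin n) (Fin r) ℝ) (hVbst : Vbᵀ * Vb = 1)
    (hVbeq : (1 - Vb * Vbᵀ) * Aᵀ * Vb = 0)
    (Vp : Matrix (Fin n) (Fin (n - r)) ℝ) (hVpst : Vpᵀ * Vp = 1)
    (hVorth : Vbᵀ * Vp = 0) (hVcompl : Vb * Vbᵀ + Vp * Vpᵀ = 1)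
    (hUpHur : IsHurwitz (Upᵀ * A * Up))
    (hVpHur : IsHurwitz (Vpᵀ * A * Vp)) :
    (∀ L : Matrix (Fin r) (Fin p) ℝ,
      IsHurwitz (Ubᵀ * A * Ub - L * (C * Ub)) → IsHurwitz (A - Ub * L * C)) ∧
    (∀ F : Matrix (Fin m) (Fin r) ℝ,
      IsHurwitz (Vbᵀ * A * Vb - (Vbᵀ * B) * F) → IsHurwitz (A - B * F * Vbᵀ)) := by
  constructor
  · intro L hL
    have hUpUb : Upᵀ * Ub = 0 := by
      have := congrArg Matrix.transpose hUorth
      simpa using this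
    have hAUb : Upᵀ * A * Ub = 0 := by
      have h := congrArg (fun X => Upᵀ * X) hUbeq
      simpa [Matrix.mul_sub, Matrix.sub_mul, Matrix.mul_one, ← Matrix.mul_assoc, hUpUb] using h
    refine isHurwitz_of_blocks (Nat.add_sub_cancel' hrn.le) _ Ub Up hUbst hUpst hUorth hUpUb
      hUcompl ?_ ?_ ?_
    · simp [Matrix.sub_mul, Matrix.mul_sub, ← Matrix.mul_assoc, hUpUb, hAUb]
    · have : Ubᵀ * (A - Ub * L * C) * Ub = Ubᵀ * A * Ub - L * (C * Ub) := by
        simp [Matrix.sub_mul, Matrix.mul_sub, ← Matrix.mul_assoc, hUbst]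
      rwa [this]
    · have : Upᵀ * (A - Ub * L * C) * Up = Upᵀ * A * Up := by
        simp [Matrix.sub_mul, Matrix.mul_sub, ← Matrix.mul_assoc, hUpUb]
      rwa [this]
  · intro F hF
    have hVpVb : Vpᵀ * Vb = 0 := by
      have := congrArg Matrix.transpose hVorth
      simpa using this
    have hAtVb : Vpᵀ * Aᵀ * Vb = 0 := by
      have h := congrArg (fun X => Vpᵀ * X) hVbeq
      simpa [Matrix.mul_sub, Matrix.sub_mul, Matrix.mul_one, ← Matrix.mul_assoc, hVpVb] using h
    have hVbAVp : Vbᵀ * A * Vp = 0 := by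
      have := congrArg Matrix.transpose hAtVb
      simpa [Matrix.transpose_mul, ← Matrix.mul_assoc] using this
    refine isHurwitz_of_blocks (Nat.sub_add_cancel hrn.le) _ Vp Vb hVpst hVbst hVpVb hVorth
      (by rw [add_comm]; exact hVcompl) ?_ ?_ ?_
    · simp [Matrix.sub_mul, Matrix.mul_sub, Matrix.mul_assoc, hVorth,
        show Vbᵀ * (A * Vp) = 0 by rw [← Matrix.mul_assoc]; exact hVbAVp]
    · have : Vpᵀ * (A - B * F * Vbᵀ) * Vp = Vpᵀ * A * Vp := by
        simp [Matrix.sub_mul, Matrix.mul_sub, Matrix.mul_assoc, hVorth]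
      rwa [this]
    · have : Vbᵀ * (A - B * F * Vbᵀ) * Vb = Vbᵀ * A * Vb - (Vbᵀ * B) * F := by
        simp [Matrix.sub_mul, Matrix.mul_sub, Matrix.mul_assoc, hVbst]
      rwa [this]
end
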